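/- There is a constant c > 0 such that the following holds for every integer n ≥ 2, every ρ ∈ (0,1), every integer ℓ ≥ 1, every 1 ≤ i ≤ n, and every pheromone vector τ: if there are i distinct indices j_1, …, j_i with τ_{j_k} ≥ min(1 − 1/n, 1 − (1−ρ)^{kℓ}) for all 1 ≤ k ≤ i (i.e., these bits form an (i,ℓ)-layer), then Π_{k=1}^i τ_{j_k} ≥ c · e^{−5/(ℓρ)}. Equivalently, under the sampling distribution P_τ the probability that all i layer bits are simultaneously set to 1 is at least c · e^{−5/(ℓρ)}. -/

import Mathlib

open Real Finset

private lemma log_le_div_e {y : ℝ} (hy : 0 < y) : Real.log y ≤ y / Real.exp 1 := by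
  have h := Real.log_le_sub_one_of_pos (x := y / Real.exp 1) (by positivity)
  rw [Real.log_div (ne_of_gt hy) (by positivity), Real.log_exp] at h
  linarith

private lemma bernoulli_inv {u : ℝ} (h0 : 0 ≤ u) (h1 : u ≤ 1) (K : ℕ) :
    (1 - u) ^ K ≤ 1 / (1 + K * u) := by
  have hb : 1 + (K:ℝ) * u ≤ (1 + u) ^ K := by
    have := one_add_mul_le_pow (a := u) (by linarith) K
    linarith [this]
  have hprod : (1 - u) ^ K * (1 + u) ^ K ≤ 1 := by
    rw [← mul_pow]
    have e : (1-u)*(1+u) = 1 - u^2 := by ring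
    rw [e]
    exact pow_le_one₀ (by nlinarith) (by nlinarith)
  have hpos : (0:ℝ) < 1 + K * u := by positivity
  rw [le_div_iff₀ hpos]
  calc (1-u)^K * (1 + K*u) ≤ (1-u)^K * (1+u)^K :=
        mul_le_mul_of_nonneg_left hb (pow_nonneg (by linarith) _)
    _ ≤ 1 := hprod

private lemma front_bound {u : ℝ} (hu0 : 0 < u) (hu1 : u < 1) (K : ℕ)
    (hKu : (K:ℝ) * u ≤ 1) :
    -Real.log (1 - (1-u)^K) ≤ Real.log 2 + (2 / Real.exp 1) / Real.sqrt ((K:ℝ) * u) := by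
  rcases Nat.eq_zero_or_pos K with hK0 | hK
  · simp [hK0] at hKu ⊢; positivity
  set s : ℝ := (K:ℝ) * u with hs
  have hs0 : 0 < s := by positivity
  have hx : (1-u)^K ≤ 1 / (1 + s) := bernoulli_inv hu0.le hu1.le K
  have hx0 : 0 ≤ (1-u)^K := pow_nonneg (by linarith) _
  have hlow : s / (1 + s) ≤ 1 - (1-u)^K := by
    have e : 1 - 1/(1+s) = s/(1+s) := by field_simp; ring
    linarith [e ▸ sub_le_sub_left hx 1]
  have hpos : 0 < 1 - (1-u)^K := lt_of_lt_of_le (by positivity) hlow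
  rw [← Real.log_inv]
  have h2 : (1 - (1-u)^K)⁻¹ ≤ (1+s)/s := by
    have := inv_anti₀ (show (0:ℝ) < s/(1+s) by positivity) hlow
    rwa [inv_div] at this
  calc Real.log (1 - (1-u)^K)⁻¹ ≤ Real.log ((1+s)/s) := Real.log_le_log (by positivity) h2
    _ ≤ Real.log (2/s) := Real.log_le_log (by positivity) (by gcongr; linarith)
    _ = Real.log 2 + Real.log s⁻¹ := by
        rw [div_eq_mul_inv, Real.log_mul (by norm_num) (by positivity)]
    _ ≤ Real.log 2 + (2 / Real.exp 1) / Real.sqrt s := by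
        have e1 : Real.log s⁻¹ = 2 * Real.log (Real.sqrt s⁻¹) := by
          rw [Real.log_sqrt (by positivity)]; ring
        have e2 : Real.sqrt s⁻¹ = (Real.sqrt s)⁻¹ := Real.sqrt_inv s
        have h3 := log_le_div_e (y := Real.sqrt s⁻¹) (by positivity)
        have hss : 0 < Real.sqrt s := Real.sqrt_pos.2 hs0
        have : Real.log s⁻¹ ≤ 2 * ((Real.sqrt s)⁻¹ / Real.exp 1) := by
          rw [e1, ← e2]; linarith
        have e3 : 2 * ((Real.sqrt s)⁻¹ / Real.exp 1) = (2 / Real.exp 1) / Real.sqrt s := by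
          field_simp
        linarith [e3 ▸ this]

private lemma tail_bound {u : ℝ} (hu0 : 0 < u) (hu1 : u < 1) (K : ℕ)
    (hKu : 1 ≤ (K:ℝ) * u) :
    -Real.log (1 - (1-u)^K) ≤ Real.exp (-((K:ℝ) * u)) / (1 - Real.exp (-1)) := by
  set t : ℝ := (1-u)^K with ht
  have ht0 : 0 ≤ t := pow_nonneg (by linarith) _
  have hte : t ≤ Real.exp (-((K:ℝ)*u)) := by
    have h1 : 1 - u ≤ Real.exp (-u) := by
      have := Real.add_one_le_exp (-u); linarith
    calc t ≤ Real.exp (-u) ^ K := pow_le_pow_left₀ (by linarith) h1 K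
      _ = Real.exp (-((K:ℝ)*u)) := by
          rw [← Real.exp_nat_mul]; ring_nf
  have hexp1 : Real.exp (-((K:ℝ)*u)) ≤ Real.exp (-1) := Real.exp_le_exp.2 (by linarith)
  have he1 : Real.exp (-1) < 1 := Real.exp_lt_one_iff.2 (by norm_num)
  have ht1 : t < 1 := lt_of_le_of_lt (hte.trans hexp1) he1
  have hne : (1:ℝ) - t ≠ 0 := by linarith
  have h := Real.one_sub_inv_le_log_of_pos (x := 1 - t) (by linarith)
  have e : (1 - t)⁻¹ = 1 + t / (1-t) := by field_simp; ring
  rw [e] at h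
  have step : t / (1-t) ≤ Real.exp (-((K:ℝ)*u)) / (1 - Real.exp (-1)) := by
    apply div_le_div₀ (by positivity) hte (by linarith) (by linarith)
  linarith


private lemma sum_rsqrt (M : ℕ) :
    ∑ k ∈ Finset.range M, 1 / Real.sqrt ((k : ℝ) + 1) ≤ 2 * Real.sqrt M := by
  induction M with
  | zero => simp
  | succ M ih =>
    rw [Finset.sum_range_succ]
    have h1 : Real.sqrt M ≥ 0 := Real.sqrt_nonneg _
    have h2 : Real.sqrt ((M:ℝ)+1) > 0 := Real.sqrt_pos.2 (by positivity)
    have e1 : Real.sqrt M ^ 2 = (M:ℝ) := Real.sq_sqrt (by positivity)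
    have e2 : Real.sqrt ((M:ℝ)+1) ^ 2 = (M:ℝ)+1 := Real.sq_sqrt (by positivity)
    have key : 1 / Real.sqrt ((M:ℝ)+1) ≤ 2 * (Real.sqrt ((M:ℝ)+1) - Real.sqrt M) := by
      rw [div_le_iff₀ h2]
      nlinarith [sq_nonneg (Real.sqrt ((M:ℝ)+1) - Real.sqrt M)]
    have e3 : ((M+1:ℕ) : ℝ) = (M:ℝ)+1 := by push_cast; ring
    rw [e3]
    linarith

private lemma geom_sum_le' {r : ℝ} (h0 : 0 ≤ r) (h1 : r < 1) (N : ℕ) :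
    ∑ k ∈ Finset.range N, r ^ k ≤ 1 / (1 - r) := by
  rw [geom_sum_eq h1.ne N]
  have hne : r - 1 ≠ 0 := by linarith
  have hne2 : (1:ℝ) - r ≠ 0 := by linarith
  have e : (r^N - 1)/(r-1) = (1 - r^N)/(1-r) := by field_simp; ring
  rw [e, div_le_div_iff₀ (by linarith) (by linarith)]
  nlinarith [pow_nonneg h0 N]

private lemma sum_neg_log_le {u : ℝ} (hu0 : 0 < u) (hu1 : u < 1) (i : ℕ) :
    ∑ k ∈ Finset.range i, -Real.log (1 - (1-u)^(k+1)) ≤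
      (Real.log 2 + 4 / Real.exp 1 + 2 / (Real.exp 1 - 1)) / u := by
  have he1 : (2.7:ℝ) < Real.exp 1 := by
    have := Real.exp_one_gt_d9; linarith
  set m : ℕ := ⌊1/u⌋₊ with hm
  set M : ℕ := min i m with hM
  have hmu : (m:ℝ) * u ≤ 1 := by
    have h := Nat.floor_le (le_of_lt (show (0:ℝ) < 1/u by positivity))
    rw [← hm] at h
    calc (m:ℝ) * u ≤ (1/u) * u := by
          apply mul_le_mul_of_nonneg_right h hu0.le
      _ = 1 := by field_simp
  have hmu2 : 1 < ((m:ℝ)+1) * u := by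
    have h := Nat.lt_floor_add_one (1/u)
    rw [← hm, div_lt_iff₀ hu0] at h
    push_cast
    linarith
  have hsplit : ∑ k ∈ Finset.range i, -Real.log (1 - (1-u)^(k+1)) =
      (∑ k ∈ Finset.range M, -Real.log (1 - (1-u)^(k+1)))
      + ∑ k ∈ Finset.Ico M i, -Real.log (1 - (1-u)^(k+1)) :=
    (Finset.sum_range_add_sum_Ico _ (min_le_left _ _)).symm
  have hfront : ∑ k ∈ Finset.range M, -Real.log (1 - (1-u)^(k+1)) ≤
      (Real.log 2 + 4 / Real.exp 1) / u := by
    have hstep : ∀ k ∈ Finset.range M, -Real.log (1 - (1-u)^(k+1)) ≤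
        Real.log 2 + (2 / Real.exp 1) / Real.sqrt u * (1 / Real.sqrt ((k:ℝ)+1)) := by
      intro k hk
      rw [Finset.mem_range] at hk
      have hk1 : (k:ℝ) + 1 ≤ m := by
        have : k + 1 ≤ m := Nat.succ_le_of_lt (lt_of_lt_of_le hk (min_le_right _ _))
        exact_mod_cast this
      have hKu : ((k+1:ℕ):ℝ) * u ≤ 1 := by
        push_cast
        nlinarith
      have hfb := front_bound hu0 hu1 (k+1) hKu
      have e : Real.sqrt (((k+1:ℕ):ℝ) * u) = Real.sqrt ((k:ℝ)+1) * Real.sqrt u := by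
        push_cast
        rw [Real.sqrt_mul (by positivity)]
      rw [e] at hfb
      have hsk : (0:ℝ) < Real.sqrt ((k:ℝ)+1) := Real.sqrt_pos.2 (by positivity)
      have hsu : (0:ℝ) < Real.sqrt u := Real.sqrt_pos.2 hu0
      have e2 : (2 / Real.exp 1) / (Real.sqrt ((k:ℝ)+1) * Real.sqrt u)
          = (2 / Real.exp 1) / Real.sqrt u * (1 / Real.sqrt ((k:ℝ)+1)) := by
        field_simp
      rw [e2] at hfb
      push_cast at hfb ⊢
      exact hfb
    have hsu : (0:ℝ) < Real.sqrt u := Real.sqrt_pos.2 hu0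
    have husq : Real.sqrt u * Real.sqrt u = u := Real.mul_self_sqrt hu0.le
    have hMm : (M:ℝ) * u ≤ 1 := by
      have h1 : (M:ℝ) ≤ m := by exact_mod_cast min_le_right i m
      nlinarith
    have hab : Real.sqrt M * Real.sqrt u ≤ 1 := by
      have : Real.sqrt ((M:ℝ) * u) ≤ Real.sqrt 1 := Real.sqrt_le_sqrt hMm
      rwa [Real.sqrt_mul (by positivity), Real.sqrt_one] at this
    calc ∑ k ∈ Finset.range M, -Real.log (1 - (1-u)^(k+1))
        ≤ ∑ k ∈ Finset.range M, (Real.log 2 + (2 / Real.exp 1) / Real.sqrt u * (1 / Real.sqrt ((k:ℝ)+1))) :=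
          Finset.sum_le_sum hstep
      _ = M * Real.log 2 + (2 / Real.exp 1) / Real.sqrt u * ∑ k ∈ Finset.range M, (1 / Real.sqrt ((k:ℝ)+1)) := by
          rw [Finset.sum_add_distrib, Finset.sum_const, Finset.mul_sum]
          simp [nsmul_eq_mul]
      _ ≤ M * Real.log 2 + (2 / Real.exp 1) / Real.sqrt u * (2 * Real.sqrt M) := by
          apply add_le_add_right
          apply mul_le_mul_of_nonneg_left (sum_rsqrt M) (by positivity)
      _ ≤ (Real.log 2 + 4 / Real.exp 1) / u := by
          have hE : (0:ℝ) < Real.exp 1 := Real.exp_pos 1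
          have hM1 : (M:ℝ) * Real.log 2 ≤ (1/u) * Real.log 2 := by
            apply mul_le_mul_of_nonneg_right _ (Real.log_nonneg (by norm_num))
            rw [le_div_iff₀ hu0]
            exact hMm
          have hsune : Real.sqrt u ≠ 0 := ne_of_gt hsu
          have e4 : (2 / Real.exp 1) / Real.sqrt u * (2 * Real.sqrt M)
              = (4 / Real.exp 1) * (Real.sqrt M * Real.sqrt u) / u := by
            field_simp
            linear_combination (-4 * Real.sqrt (M:ℝ)) * husq
          have h6 : (4 / Real.exp 1) * (Real.sqrt M * Real.sqrt u) ≤ 4 / Real.exp 1 := by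
            have h7 : (0:ℝ) < 4 / Real.exp 1 := by positivity
            nlinarith
          have h5 : (4 / Real.exp 1) * (Real.sqrt M * Real.sqrt u) / u ≤ (4 / Real.exp 1) / u := by
            gcongr ?_ / u
          have e5 : (Real.log 2 + 4 / Real.exp 1)/u = (1/u) * Real.log 2 + (4 / Real.exp 1)/u := by
            field_simp
          rw [e4, e5]
          linarith
  have htail : ∑ k ∈ Finset.Ico M i, -Real.log (1 - (1-u)^(k+1)) ≤
      (2 / (Real.exp 1 - 1)) / u := by
    rcases le_or_gt i M with hle | hlt
    · rw [Finset.Ico_eq_empty (by omega)]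
      simp only [Finset.sum_empty]
      apply div_nonneg (div_nonneg (by norm_num) (by linarith)) hu0.le
    · have hMeq : M = m := by
        rcases min_cases i m with ⟨h1, h2⟩ | ⟨h1, h2⟩
        · omega
        · omega
      set r : ℝ := Real.exp (-u) with hr
      have hr0 : 0 < r := Real.exp_pos _
      have hr1 : r < 1 := Real.exp_lt_one_iff.2 (by linarith)
      have hrhalf : r ≤ 1 - u/2 := by
        have hb : 1 + u ≤ Real.exp u := by
          have := Real.add_one_le_exp u; linarith
        have : r ≤ 1/(1+u) := by
          rw [hr, Real.exp_neg, one_div]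
          exact inv_anti₀ (by linarith) hb
        have h8 : 1/(1+u) ≤ 1 - u/2 := by
          rw [div_le_iff₀ (by linarith)]
          nlinarith
        linarith
      have hstep : ∀ k ∈ Finset.Ico M i, -Real.log (1 - (1-u)^(k+1)) ≤
          (1 / (1 - Real.exp (-1))) * r^(k+1) := by
        intro k hk
        rw [Finset.mem_Ico] at hk
        have hk1 : m + 1 ≤ k + 1 := by omega
        have hKu : 1 ≤ ((k+1:ℕ):ℝ) * u := by
          have hc : ((m+1:ℕ):ℝ) ≤ ((k+1:ℕ):ℝ) := Nat.cast_le.2 hk1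
          push_cast at hc ⊢
          nlinarith
        have htb := tail_bound hu0 hu1 (k+1) hKu
        have e6 : Real.exp (-(((k+1:ℕ):ℝ) * u)) = r^(k+1) := by
          rw [hr, ← Real.exp_nat_mul]
          congr 1
          push_cast
          ring
        rw [e6] at htb
        have e7 : r^(k+1) / (1 - Real.exp (-1)) = (1 / (1 - Real.exp (-1))) * r^(k+1) := by
          ring
        rw [e7] at htb
        exact htb
      have hgeom : ∑ k ∈ Finset.Ico M i, r^(k+1) ≤ Real.exp (-1) * (1/(1-r)) := by
        rw [Finset.sum_Ico_eq_sum_range]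
        have e8 : ∀ j, r^(M + j + 1) = r^(M+1) * r^j := by
          intro j; rw [← pow_add]; congr 1; omega
        rw [Finset.sum_congr rfl (fun j _ => e8 j), ← Finset.mul_sum]
        have h9 : r^(M+1) ≤ Real.exp (-1) := by
          have e9 : r^(M+1) = Real.exp (-(((M:ℝ)+1) * u)) := by
            rw [hr, ← Real.exp_nat_mul]
            congr 1
            push_cast
            ring
          rw [e9]
          apply Real.exp_le_exp.2
          rw [hMeq]
          linarith
        have h10 : ∑ j ∈ Finset.range (i - M), r^j ≤ 1/(1-r) :=
          geom_sum_le' hr0.le hr1 _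
        have h11 : (0:ℝ) ≤ ∑ j ∈ Finset.range (i - M), r^j :=
          Finset.sum_nonneg (fun j _ => pow_nonneg hr0.le j)
        calc r^(M+1) * ∑ j ∈ Finset.range (i - M), r^j
            ≤ Real.exp (-1) * ∑ j ∈ Finset.range (i - M), r^j :=
              mul_le_mul_of_nonneg_right h9 h11
          _ ≤ Real.exp (-1) * (1/(1-r)) :=
              mul_le_mul_of_nonneg_left h10 (Real.exp_pos _).le
      have hee : Real.exp (-1) < 1 := Real.exp_lt_one_iff.2 (by norm_num)
      have hgeom2 : Real.exp (-1) * (1/(1-r)) ≤ Real.exp (-1) * (2/u) := by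
        apply mul_le_mul_of_nonneg_left _ (Real.exp_pos _).le
        rw [div_le_div_iff₀ (by linarith) hu0]
        nlinarith
      calc ∑ k ∈ Finset.Ico M i, -Real.log (1 - (1-u)^(k+1))
          ≤ ∑ k ∈ Finset.Ico M i, (1 / (1 - Real.exp (-1))) * r^(k+1) :=
            Finset.sum_le_sum hstep
        _ = (1 / (1 - Real.exp (-1))) * ∑ k ∈ Finset.Ico M i, r^(k+1) := by
            rw [Finset.mul_sum]
        _ ≤ (1 / (1 - Real.exp (-1))) * (Real.exp (-1) * (2/u)) := by
            exact mul_le_mul_of_nonneg_left (hgeom.trans hgeom2)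
              (le_of_lt (div_pos one_pos (by linarith)))
        _ ≤ (2 / (Real.exp 1 - 1)) / u := by
            have e10 : Real.exp (-1) = (Real.exp 1)⁻¹ := Real.exp_neg 1
            rw [e10]
            have hE : (0:ℝ) < Real.exp 1 := Real.exp_pos 1
            have hE1 : (1:ℝ) < Real.exp 1 := by linarith
            have hEm1 : Real.exp 1 - 1 ≠ 0 := by linarith
            have hen : Real.exp 1 ≠ 0 := by linarith
            have hun : u ≠ 0 := ne_of_gt hu0
            have e11 : 1 - (Real.exp 1)⁻¹ = (Real.exp 1 - 1)/Real.exp 1 := by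
              field_simp
            rw [e11, one_div_div]
            have : Real.exp 1 / (Real.exp 1 - 1) * ((Real.exp 1)⁻¹ * (2/u)) = (2 / (Real.exp 1 - 1)) / u := by
              field_simp
            rw [this]
  rw [hsplit]
  have efinal : (Real.log 2 + 4 / Real.exp 1 + 2 / (Real.exp 1 - 1)) / u
      = (Real.log 2 + 4 / Real.exp 1) / u + (2 / (Real.exp 1 - 1)) / u := by
    ring
  rw [efinal]
  exact add_le_add hfront htail

private lemma exp_neg_two_le {n : ℕ} (hn : 2 ≤ n) : Real.exp (-2) ≤ (1 - 1/(n:ℝ))^n := by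
  have hn2 : (2:ℝ) ≤ (n:ℝ) := by exact_mod_cast hn
  have hn0 : (0:ℝ) < n := by linarith
  have h1 : Real.exp (-(2/(n:ℝ))) ≤ 1 - 1/(n:ℝ) := by
    have hb : 1 + 2/(n:ℝ) ≤ Real.exp (2/(n:ℝ)) := by
      have := Real.add_one_le_exp (2/(n:ℝ)); linarith
    have h2 : Real.exp (-(2/(n:ℝ))) ≤ (1 + 2/(n:ℝ))⁻¹ := by
      rw [Real.exp_neg]
      exact inv_anti₀ (by positivity) hb
    have h3 : (1 + 2/(n:ℝ))⁻¹ ≤ 1 - 1/(n:ℝ) := by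
      rw [inv_le_iff_one_le_mul₀ (by positivity)]
      have e : (1 - 1/(n:ℝ)) * (1 + 2/(n:ℝ)) = 1 + 1/(n:ℝ) - 2/(n:ℝ)^2 := by
        field_simp
        ring
      rw [e]
      have : 2/(n:ℝ)^2 ≤ 1/(n:ℝ) := by
        rw [div_le_div_iff₀ (by positivity) hn0]
        nlinarith
      linarith
    linarith
  have e2 : Real.exp (-2) = Real.exp (-(2/(n:ℝ)))^n := by
    rw [← Real.exp_nat_mul]
    congr 1
    field_simp
  rw [e2]
  exact pow_le_pow_left₀ (Real.exp_pos _).le h1 n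

/-- If `i` distinct bits form an `(i, ℓ)`-layer, i.e. the `k`-th of these bits has
pheromone at least `min(1 - 1/n, 1 - (1-ρ)^{kℓ})`, then the probability that all `i`
layer bits are simultaneously set to 1 (the product of their pheromones) is
`Ω(e^{-5/(ℓρ)})`, with a constant independent of all parameters. -/
theorem stmt_7 : ∃ c : ℝ, 0 < c ∧
    ∀ (n : ℕ), 2 ≤ n → ∀ (ρ : ℝ), 0 < ρ → ρ < 1 →
    ∀ (ℓ : ℕ), 1 ≤ ℓ → ∀ (i : ℕ), 1 ≤ i → i ≤ n →
    ∀ (τ : Fin n → ℝ), (∀ j, 1 / (n : ℝ) ≤ τ j ∧ τ j ≤ 1 - 1 / (n : ℝ)) →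
    ∀ (js : Fin i → Fin n), Function.Injective js →
    (∀ k : Fin i, min (1 - 1 / (n : ℝ)) (1 - (1 - ρ) ^ (((k : ℕ) + 1) * ℓ)) ≤ τ (js k)) →
    c * Real.exp (-5 / ((ℓ : ℝ) * ρ)) ≤ ∏ k, τ (js k) := by
  refine ⟨Real.exp (-6), Real.exp_pos _, ?_⟩
  intro n hn ρ hρ0 hρ1 ℓ hℓ i hi1 hin τ hτ js hinj hlayer
  have hn2 : (2:ℝ) ≤ (n:ℝ) := by exact_mod_cast hn
  have hn0 : (0:ℝ) < n := by linarith
  have hhalf : (1:ℝ)/2 ≤ 1 - 1/(n:ℝ) := by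
    have : (1:ℝ)/(n:ℝ) ≤ 1/2 := by
      rw [div_le_div_iff₀ hn0 (by norm_num)]
      linarith
    linarith
  set x : ℝ := (1 - ρ)^ℓ with hx
  set u : ℝ := 1 - x with hu
  have hq0 : (0:ℝ) < 1 - ρ := by linarith
  have hq1 : (1:ℝ) - ρ < 1 := by linarith
  have hx0 : 0 < x := pow_pos hq0 ℓ
  have hx1 : x < 1 := pow_lt_one₀ hq0.le hq1 (by omega)
  have hu0 : 0 < u := by simp only [hu]; linarith
  have hu1 : u < 1 := by simp only [hu]; linarith
  set L : ℝ := (ℓ:ℝ) * ρ with hL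
  have hL0 : 0 < L := by
    apply mul_pos _ hρ0
    exact_mod_cast Nat.pos_of_ne_zero (by omega)
  -- 1/u ≤ 1/L + 1
  have hinvu : 1/u ≤ 1/L + 1 := by
    have hb : x ≤ 1/(1 + L) := by
      have := bernoulli_inv (u := ρ) hρ0.le hρ1.le ℓ
      simpa [hx, hL] using this
    have hLu : L/(1+L) ≤ u := by
      have e : 1 - 1/(1+L) = L/(1+L) := by field_simp; ring
      simp only [hu]
      linarith [e ▸ sub_le_sub_left hb 1]
    rw [div_le_iff₀ hu0]
    have h2 : (1/L + 1) * (L/(1+L)) = 1 := by field_simp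
    calc (1:ℝ) = (1/L + 1) * (L/(1+L)) := h2.symm
      _ ≤ (1/L + 1) * u := by
          apply mul_le_mul_of_nonneg_left hLu
          positivity
  -- numeric constant
  have he1 : (2.7:ℝ) < Real.exp 1 := by
    have := Real.exp_one_gt_d9; linarith
  have hC : Real.log 2 + 4 / Real.exp 1 + 2 / (Real.exp 1 - 1) ≤ 3.4 := by
    have h1 : Real.log 2 ≤ 0.6931471808 := le_of_lt Real.log_two_lt_d9
    have h2 : 4 / Real.exp 1 ≤ 1.482 := by
      rw [div_le_iff₀ (Real.exp_pos 1)]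
      nlinarith
    have h3 : 2 / (Real.exp 1 - 1) ≤ 1.177 := by
      rw [div_le_iff₀ (by linarith)]
      nlinarith
    linarith
  -- sum bound
  have hsum : ∑ k ∈ Finset.range i, -Real.log (1 - x^(k+1)) ≤ 5/L + 3.4 := by
    have h1 := sum_neg_log_le hu0 hu1 i
    have e : (1:ℝ) - u = x := by simp [hu]
    rw [e] at h1
    have h54 : (3.4:ℝ)/L ≤ 5/L := by
      rw [div_le_div_iff₀ hL0 hL0]
      nlinarith
    calc ∑ k ∈ Finset.range i, -Real.log (1 - x^(k+1))
        ≤ (Real.log 2 + 4 / Real.exp 1 + 2 / (Real.exp 1 - 1)) / u := h1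
      _ ≤ 3.4 / u := by gcongr
      _ = 3.4 * (1/u) := by ring
      _ ≤ 3.4 * (1/L + 1) := mul_le_mul_of_nonneg_left hinvu (by norm_num)
      _ = 3.4/L + 3.4 := by ring
      _ ≤ 5/L + 3.4 := by linarith
  -- pointwise bound
  have hb0 : ∀ k : ℕ, 0 ≤ 1 - x^(k+1) := by
    intro k
    have : x^(k+1) ≤ 1 := pow_le_one₀ hx0.le hx1.le
    linarith
  have hb1 : ∀ k : ℕ, 1 - x^(k+1) ≤ 1 := by
    intro k
    have : 0 ≤ x^(k+1) := by positivity
    linarith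
  have hpt : ∀ k : Fin i, (1 - 1/(n:ℝ)) * (1 - x^((k:ℕ)+1)) ≤ τ (js k) := by
    intro k
    have hexp : (1 - ρ) ^ (((k:ℕ) + 1) * ℓ) = x^((k:ℕ)+1) := by
      rw [hx, ← pow_mul, mul_comm]
    have hlay := hlayer k
    rw [hexp] at hlay
    refine le_trans (le_min ?_ ?_) hlay
    · have h0 : (0:ℝ) ≤ 1 - 1/n := by linarith
      exact mul_le_of_le_one_right h0 (hb1 _)
    · have h1n : (1:ℝ) - 1/n ≤ 1 := by
        have : (0:ℝ) ≤ 1/(n:ℝ) := by positivity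
        linarith
      exact mul_le_of_le_one_left (hb0 _) h1n
  have hprod1 : ∏ k : Fin i, ((1 - 1/(n:ℝ)) * (1 - x^((k:ℕ)+1))) ≤ ∏ k, τ (js k) := by
    apply Finset.prod_le_prod
    · intro k _
      have := hb0 (k:ℕ)
      have h0 : (0:ℝ) ≤ 1 - 1/n := by linarith
      positivity
    · intro k _
      exact hpt k
  have hsplitprod : ∏ k : Fin i, ((1 - 1/(n:ℝ)) * (1 - x^((k:ℕ)+1)))
      = (1 - 1/(n:ℝ))^i * ∏ k ∈ Finset.range i, (1 - x^(k+1)) := by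
    rw [Finset.prod_mul_distrib, Finset.prod_const, Finset.card_univ, Fintype.card_fin]
    congr 1
    exact Fin.prod_univ_eq_prod_range (fun k => 1 - x^(k+1)) i
  have hpow : Real.exp (-2) ≤ (1 - 1/(n:ℝ))^i :=
    le_trans (exp_neg_two_le hn) (pow_le_pow_of_le_one (by linarith) (by
      have : (0:ℝ) ≤ 1/(n:ℝ) := by positivity
      linarith) hin)
  have hprodeq : ∏ k ∈ Finset.range i, (1 - x^(k+1))
      = Real.exp (∑ k ∈ Finset.range i, Real.log (1 - x^(k+1))) := by
    rw [Real.exp_sum]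
    apply Finset.prod_congr rfl
    intro k _
    have hpos : 0 < 1 - x^(k+1) := by
      have : x^(k+1) < 1 := pow_lt_one₀ hx0.le hx1 (by omega)
      linarith
    rw [Real.exp_log hpos]
  have hlogsum : -(5/L) - 3.4 ≤ ∑ k ∈ Finset.range i, Real.log (1 - x^(k+1)) := by
    have e : ∑ k ∈ Finset.range i, -Real.log (1 - x^(k+1))
        = -∑ k ∈ Finset.range i, Real.log (1 - x^(k+1)) := by
      rw [← Finset.sum_neg_distrib]
    rw [e] at hsum
    linarith
  have hprodlow : Real.exp (-(5/L) - 3.4) ≤ ∏ k ∈ Finset.range i, (1 - x^(k+1)) := by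
    rw [hprodeq]
    exact Real.exp_le_exp.2 hlogsum
  calc Real.exp (-6) * Real.exp (-5 / ((ℓ:ℝ) * ρ))
      = Real.exp (-6 + (-5/L)) := by rw [Real.exp_add]
    _ ≤ Real.exp (-2 + (-(5/L) - 3.4)) := by
        apply Real.exp_le_exp.2
        have : -5/L = -(5/L) := by rw [neg_div]
        linarith [this]
    _ = Real.exp (-2) * Real.exp (-(5/L) - 3.4) := Real.exp_add _ _
    _ ≤ (1 - 1/(n:ℝ))^i * ∏ k ∈ Finset.range i, (1 - x^(k+1)) := by
        apply mul_le_mul hpow hprodlow (Real.exp_pos _).le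
        calc (0:ℝ) ≤ Real.exp (-2) := (Real.exp_pos _).le
          _ ≤ (1 - 1/(n:ℝ))^i := hpow
    _ = ∏ k : Fin i, ((1 - 1/(n:ℝ)) * (1 - x^((k:ℕ)+1))) := hsplitprod.symm
    _ ≤ ∏ k, τ (js k) := hprod1
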